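/- The alternating product f₁⁻¹·f₂·f₃⁻¹·f₄ ⋯ f_{n−3}⁻¹·f_{n−2} (taken left to right, with fᵢ inverted for odd i and not inverted for even i, for i = 1, …, n−2) equals the identity element of G. -/

import Mathlib

private lemma rev_map_prod {G : Type*} [Group G] (t : ℕ → G) (l : List ℕ)
    (h : ∀ j ∈ l, (t j)⁻¹ = t j) :
    (l.reverse.map t).prod = ((l.map t).prod)⁻¹ := by
  rw [List.map_reverse, List.prod_reverse_noncomm, List.map_map]
  congr 1
  exact congrArg List.prod (List.map_congr_left fun j hj => h j hj)

private def Bp {G : Type*} [Group G] (t : ℕ → G) (m i : ℕ) : G :=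
  ((List.range' (i + 1) (m - i)).map t).prod

private lemma Bp_succ {G : Type*} [Group G] (t : ℕ → G) (m i : ℕ) (h : i + 1 ≤ m) :
    Bp t m i = t (i + 1) * Bp t m (i + 1) := by
  unfold Bp
  rw [show m - i = (m - (i + 1)) + 1 by omega, List.range'_succ]
  simp [mul_assoc]

private lemma Bp_last {G : Type*} [Group G] (t : ℕ → G) (m : ℕ) :
    Bp t m m = 1 := by
  simp [Bp]

/-- Let `n ≥ 6` be even, `G` a group, `t 1, …, t (n-1)` involutions with
`t 1 = t (n-1)`.  With `f 1 = t (n-1) ⋯ t 2`,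
`f i = t (n-1) ⋯ t (i+1) * t i * t (i+1) ⋯ t (n-2)` for `2 ≤ i ≤ n-3`, and
`f (n-2) = t (n-1) * t (n-2)`, the alternating product
`f 1⁻¹ * f 2 * f 3⁻¹ * ⋯ * f (n-3)⁻¹ * f (n-2)` (with `f i` inverted for odd `i`)
equals `1`. -/
theorem alternating_product_of_f_eq_one {G : Type*} [Group G] (n : ℕ) (hn : 6 ≤ n)
    (hEven : Even n) (t f : ℕ → G)
    (ht : ∀ i, 1 ≤ i → i ≤ n - 1 → t i * t i = 1)
    (ht1 : t 1 = t (n - 1))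
    (hf1 : f 1 = ((List.range' 2 (n - 2)).reverse.map t).prod)
    (hfi : ∀ i, 2 ≤ i → i ≤ n - 3 →
      f i = ((List.range' (i + 1) (n - 1 - i)).reverse.map t).prod * t i *
        ((List.range' (i + 1) (n - 2 - i)).map t).prod)
    (hfn2 : f (n - 2) = t (n - 1) * t (n - 2)) :
    ((List.range' 1 (n - 2)).map (fun i => if i % 2 = 1 then (f i)⁻¹ else f i)).prod = 1 := by
  obtain ⟨m, rfl⟩ : ∃ m, n = m + 2 := ⟨n - 2, by omega⟩
  have hm4 : 4 ≤ m := by omega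
  have hmE : m % 2 = 0 := by
    obtain ⟨k, hk⟩ := hEven; omega
  have e1 : m + 2 - 1 = m + 1 := by omega
  have e2 : m + 2 - 2 = m := by omega
  have e3 : m + 2 - 3 = m - 1 := by omega
  simp only [e1, e2, e3] at ht ht1 hf1 hfi hfn2 ⊢
  have hinv : ∀ i, 1 ≤ i → i ≤ m + 1 → (t i)⁻¹ = t i := fun i h1 h2 =>
    inv_eq_of_mul_eq_one_right (ht i h1 h2)
  have key : ∀ a, 1 ≤ a → a ≤ m + 1 → ∀ y : G, t a * (t a * y) = y := by
    intro a h1 h2 y; rw [← mul_assoc, ht a h1 h2, one_mul]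
  -- the closed form for f i, 2 ≤ i ≤ m
  have hf' : ∀ i, 2 ≤ i → i ≤ m →
      f i = t (m + 1) * (Bp t m i)⁻¹ * (t i * Bp t m i) := by
    intro i h2 hm
    rcases eq_or_lt_of_le hm with rfl | hlt
    · rw [hfn2, Bp_last]
      simp [mul_assoc]
    · have him : i ≤ m - 1 := by omega
      rw [hfi i h2 him]
      have hrev : ((List.range' (i + 1) (m + 1 - i)).reverse.map t).prod
          = ((List.range' (i + 1) (m + 1 - i)).map t).prod⁻¹ := by
        apply rev_map_prod
        intro j hj
        rw [List.mem_range'_1] at hj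
        exact hinv j (by omega) (by omega)
      have hasc : ((List.range' (i + 1) (m + 1 - i)).map t).prod
          = Bp t m i * t (m + 1) := by
        rw [show m + 1 - i = (m - i) + 1 by omega, List.range'_concat]
        rw [show i + 1 + 1 * (m - i) = m + 1 by omega]
        simp [Bp]
      rw [hrev, hasc, mul_inv_rev, hinv (m + 1) (by omega) (by omega)]
      simp [Bp, mul_assoc]
  -- the closed form for f 1
  have hf1' : f 1 = t (m + 1) * (Bp t m 1)⁻¹ := by
    rw [hf1]
    have hrev : ((List.range' 2 m).reverse.map t).prod
        = ((List.range' 2 m).map t).prod⁻¹ := by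
      apply rev_map_prod
      intro j hj
      rw [List.mem_range'_1] at hj
      exact hinv j (by omega) (by omega)
    have hasc : ((List.range' 2 m).map t).prod = Bp t m 1 * t (m + 1) := by
      rw [show m = (m - 1) + 1 by omega, List.range'_concat]
      rw [show 2 + 1 * (m - 1) = m + 1 by omega]
      simp [Bp, show m - 1 + 1 - 1 = m - 1 by omega, show m - 1 + 1 + 1 = m + 1 by omega,
        show m - 1 + 1 = m by omega]
    rw [hrev, hasc, mul_inv_rev, hinv (m + 1) (by omega) (by omega)]
  -- one telescoping step
  have pairstep : ∀ j, 2 ≤ j → j + 2 ≤ m →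
      Bp t m j * (f (j + 1))⁻¹ * f (j + 2) = Bp t m (j + 2) := by
    intro j hj2 hjm
    rw [hf' (j + 1) (by omega) (by omega), hf' (j + 2) (by omega) (by omega),
      Bp_succ t m j (by omega), Bp_succ t m (j + 1) (by omega)]
    have h1 := key (j + 1) (by omega) (by omega)
    have h2 := key (j + 2) (by omega) (by omega)
    have h3 := key (m + 1) (by omega) (by omega)
    simp only [mul_inv_rev, inv_inv, hinv (j + 1) (by omega) (by omega),
      hinv (j + 2) (by omega) (by omega), hinv (m + 1) (by omega) (by omega),
      mul_assoc, mul_inv_cancel_left, inv_mul_cancel_left, h1, h2, h3,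
      ht (j + 1) (by omega) (by omega), ht (j + 2) (by omega) (by omega),
      ht (m + 1) (by omega) (by omega), one_mul, mul_one]
  -- main induction
  have main : ∀ k, 2 + 2 * k ≤ m →
      ((List.range' 1 (2 + 2 * k)).map
        (fun i => if i % 2 = 1 then (f i)⁻¹ else f i)).prod = Bp t m (2 + 2 * k) := by
    intro k
    induction k with
    | zero =>
      intro _
      have hr : List.range' 1 (2 + 2 * 0) = [1, 2] := by decide
      rw [hr]
      simp only [List.map_cons, List.map_nil, List.prod_cons, List.prod_nil, mul_one]
      norm_num
      rw [hf1', hf' 2 (by omega) (by omega), Bp_succ t m 1 (by omega)]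
      have h1 := key 2 (by omega) (by omega)
      have h3 := key (m + 1) (by omega) (by omega)
      simp only [mul_inv_rev, inv_inv, hinv 2 (by omega) (by omega),
        hinv (m + 1) (by omega) (by omega), mul_assoc, mul_inv_cancel_left,
        inv_mul_cancel_left, h1, h3, ht 2 (by omega) (by omega),
        ht (m + 1) (by omega) (by omega), one_mul, mul_one]
    | succ k ih =>
      intro hk
      have hk' : 2 + 2 * k ≤ m := by omega
      have hsplit : List.range' 1 (2 + 2 * (k + 1))
          = List.range' 1 (2 + 2 * k) ++ List.range' (3 + 2 * k) 2 := by
        have := List.range'_append (s := 1) (m := 2 + 2 * k) (n := 2) (step := 1)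
        rw [show 1 + 1 * (2 + 2 * k) = 3 + 2 * k by omega] at this
        rw [show 2 + 2 * (k + 1) = 2 + 2 * k + 2 by omega]
        exact this.symm
      rw [hsplit, List.map_append, List.prod_append, ih hk']
      have hr2 : List.range' (3 + 2 * k) 2 = [3 + 2 * k, 4 + 2 * k] := by
        rw [List.range'_succ, List.range'_succ]
        simp [show 3 + 2 * k + 1 = 4 + 2 * k by omega]
      rw [hr2]
      simp only [List.map_cons, List.map_nil, List.prod_cons, List.prod_nil, mul_one,
        if_pos (show (3 + 2 * k) % 2 = 1 by omega),
        if_neg (show ¬ (4 + 2 * k) % 2 = 1 by omega)]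
      rw [← mul_assoc]
      rw [show 3 + 2 * k = (2 + 2 * k) + 1 by omega, show 4 + 2 * k = (2 + 2 * k) + 2 by omega,
        show 2 + 2 * (k + 1) = (2 + 2 * k) + 2 by omega]
      exact pairstep (2 + 2 * k) (by omega) (by omega)
  obtain ⟨k, hk⟩ : ∃ k, m = 2 + 2 * k := ⟨(m - 2) / 2, by omega⟩
  rw [hk, main k (by omega), ← hk]
  exact Bp_last t m
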